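/- For every integer n ≥ 3 and every x ∈ [0,1], one has T_n(x) + x + 1 − ((2x+1)/n²)·T_n′(x) ≥ 0. Equality occurs only at x = 1 and, if n ≡ 2 (mod 4), also at x = 0. -/

import Mathlib

open Polynomial

/-- The `n`-th Chebyshev polynomial of the first kind, as a real polynomial. -/
noncomputable def chebT (n : ℕ) : Polynomial ℝ := Polynomial.Chebyshev.T ℝ (n : ℤ)

namespace PhiAux
open Real
lemma aux_mono {φ : ℝ → ℝ} (hφ : Differentiable ℝ φ) (h0 : 0 ≤ φ 0)
    (hd : ∀ y, 0 ≤ y → 0 ≤ deriv φ y) {x : ℝ} (hx : 0 ≤ x) : 0 ≤ φ x := by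
  have hm : MonotoneOn φ (Set.Ici 0) :=
    monotoneOn_of_deriv_nonneg (convex_Ici 0) hφ.continuous.continuousOn
      hφ.differentiableOn (fun y hy => hd y (le_of_lt (by simpa using hy)))
  exact h0.trans (hm Set.self_mem_Ici hx hx)

lemma sin_ge_t3 (x : ℝ) (hx : 0 ≤ x) : x - x^3/6 ≤ Real.sin x := by
  have hD : ∀ y : ℝ, HasDerivAt (fun y => Real.sin y - (y - y^3/6))
      (Real.cos y - (1 - y^2/2)) y := by
    intro y
    have h1 : HasDerivAt (fun y : ℝ => y - y^3/6) (1 - y^2/2) y := by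
      have := (hasDerivAt_id y).sub ((hasDerivAt_pow 3 y).div_const 6)
      exact this.congr_deriv (by ring)
    exact (Real.hasDerivAt_sin y).sub h1
  have := aux_mono (φ := fun y => Real.sin y - (y - y^3/6))
    (fun y => (hD y).differentiableAt) (by norm_num)
    (fun y hy => by
      rw [(hD y).deriv]
      nlinarith [Real.one_sub_sq_div_two_le_cos (x := y)]) hx
  linarith [this]

lemma cos_le_t4 (x : ℝ) (hx : 0 ≤ x) : Real.cos x ≤ 1 - x^2/2 + x^4/24 := by
  have hD : ∀ y : ℝ, HasDerivAt (fun y => (1 - y^2/2 + y^4/24) - Real.cos y)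
      ((-y + y^3/6) - (-Real.sin y)) y := by
    intro y
    have h1 : HasDerivAt (fun y : ℝ => 1 - y^2/2 + y^4/24) (-y + y^3/6) y := by
      have := ((hasDerivAt_const y (1:ℝ)).sub ((hasDerivAt_pow 2 y).div_const 2)).add
        ((hasDerivAt_pow 4 y).div_const 24)
      exact this.congr_deriv (by ring)
    exact h1.sub (Real.hasDerivAt_cos y)
  have := aux_mono (φ := fun y => (1 - y^2/2 + y^4/24) - Real.cos y)
    (fun y => (hD y).differentiableAt) (by norm_num)
    (fun y hy => by
      rw [(hD y).deriv]
      nlinarith [sin_ge_t3 y hy]) hx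
  linarith [this]

lemma sin_le_t5 (x : ℝ) (hx : 0 ≤ x) : Real.sin x ≤ x - x^3/6 + x^5/120 := by
  have hD : ∀ y : ℝ, HasDerivAt (fun y => (y - y^3/6 + y^5/120) - Real.sin y)
      ((1 - y^2/2 + y^4/24) - Real.cos y) y := by
    intro y
    have h1 : HasDerivAt (fun y : ℝ => y - y^3/6 + y^5/120) (1 - y^2/2 + y^4/24) y := by
      have := ((hasDerivAt_id y).sub ((hasDerivAt_pow 3 y).div_const 6)).add
        ((hasDerivAt_pow 5 y).div_const 120)
      exact this.congr_deriv (by ring)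
    exact h1.sub (Real.hasDerivAt_sin y)
  have := aux_mono (φ := fun y => (y - y^3/6 + y^5/120) - Real.sin y)
    (fun y => (hD y).differentiableAt) (by norm_num)
    (fun y hy => by
      rw [(hD y).deriv]
      nlinarith [cos_le_t4 y hy]) hx
  linarith [this]

lemma cos_ge_t6 (x : ℝ) (hx : 0 ≤ x) : 1 - x^2/2 + x^4/24 - x^6/720 ≤ Real.cos x := by
  have hD : ∀ y : ℝ, HasDerivAt (fun y => Real.cos y - (1 - y^2/2 + y^4/24 - y^6/720))
      (-Real.sin y - (-y + y^3/6 - y^5/120)) y := by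
    intro y
    have h1 : HasDerivAt (fun y : ℝ => 1 - y^2/2 + y^4/24 - y^6/720) (-y + y^3/6 - y^5/120) y := by
      have := (((hasDerivAt_const y (1:ℝ)).sub ((hasDerivAt_pow 2 y).div_const 2)).add
        ((hasDerivAt_pow 4 y).div_const 24)).sub ((hasDerivAt_pow 6 y).div_const 720)
      exact this.congr_deriv (by ring)
    exact (Real.hasDerivAt_cos y).sub h1
  have := aux_mono (φ := fun y => Real.cos y - (1 - y^2/2 + y^4/24 - y^6/720))
    (fun y => (hD y).differentiableAt) (by norm_num)
    (fun y hy => by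
      rw [(hD y).deriv]
      nlinarith [sin_le_t5 y hy]) hx
  linarith [this]
lemma coreA_poly (u s : ℝ) (hu : 0 < u) (h9 : 9*u ≤ s) (hs : s ≤ 121/25) :
    0 < s^2/60 - s^3/720 - u*s/12 + u*s^2/720 + u*s^3/4320 + u^2*s/72 - u^2*s^2/1440 := by
  have hs0 : 0 < s := by linarith
  have h1 : 0 ≤ (s/12) * (s/9 - u) := mul_nonneg (by linarith) (by linarith)
  have h2 : 0 ≤ (s^2/1440) * (s/9 - u) * (s/9 + u) :=
    mul_nonneg (mul_nonneg (by positivity) (by linarith)) (by linarith)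
  have hq : 0 < 864 - 162*s - s^2 := by nlinarith [mul_nonneg hs0.le (sub_nonneg.2 hs)]
  have h3 : 0 < s^2/116640 * (864 - 162*s - s^2) := by positivity
  nlinarith [mul_pos (mul_pos hu hs0) hs0, mul_pos (mul_pos (mul_pos hu hs0) hs0) hs0]
lemma regionA_aux (θ t N : ℝ) (hθ : 0 < θ) (htdef : t = N*θ) (hn3 : 3 ≤ N) (ht : t ≤ 11/5) :
    (2*Real.cos θ + 1) * Real.sin t <
      N * Real.sin θ * (Real.cos t + Real.cos θ + 1) := by
  have ht3 : 3*θ ≤ t := by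
    have := mul_le_mul_of_nonneg_right hn3 hθ.le
    simpa [htdef] using this
  have ht0 : 0 < t := by nlinarith
  have hθu : θ ≤ 11/15 := by nlinarith
  have hu9 : 9*θ^2 ≤ t^2 := by nlinarith
  have hts : t^2 ≤ 121/25 := by nlinarith
  -- Taylor facts
  have f1 : Real.sin t ≤ t - t^3/6 + t^5/120 := sin_le_t5 t ht0.le
  have f2 : 1 - t^2/2 + t^4/24 - t^6/720 ≤ Real.cos t := cos_ge_t6 t ht0.le
  have f3 : θ - θ^3/6 ≤ Real.sin θ := sin_ge_t3 θ hθ.le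
  have f4 : Real.cos θ ≤ 1 - θ^2/2 + θ^4/24 := cos_le_t4 θ hθ.le
  have f5 : 1 - θ^2/2 ≤ Real.cos θ := Real.one_sub_sq_div_two_le_cos
  -- positivity facts
  have hsθ : 0 < θ - θ^3/6 := by nlinarith
  have hsinθ : 0 < Real.sin θ := lt_of_lt_of_le hsθ f3
  have hB : (0:ℝ) < 3 - t^2/2 + t^4/24 - t^6/720 - θ^2/2 := by
    nlinarith [mul_nonneg (sub_nonneg.2 hts) (sq_nonneg t),
      mul_nonneg (mul_nonneg (sub_nonneg.2 hts) (sq_nonneg t)) (sq_nonneg t), sq_nonneg t]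
  have hsin_t_nonneg : 0 ≤ Real.sin t := by
    apply Real.sin_nonneg_of_nonneg_of_le_pi ht0.le
    linarith [Real.pi_gt_three]
  have hub2 : 2*Real.cos θ + 1 ≤ 3 - θ^2 + θ^4/12 := by nlinarith
  have hub : (2*Real.cos θ + 1) * Real.sin t ≤ (3 - θ^2 + θ^4/12) * (t - t^3/6 + t^5/120) :=
    mul_le_mul hub2 f1 hsin_t_nonneg (by nlinarith)
  have h1 : t * (θ - θ^3/6) ≤ t * Real.sin θ := mul_le_mul_of_nonneg_left f3 ht0.le
  have h2 : 3 - t^2/2 + t^4/24 - t^6/720 - θ^2/2 ≤ Real.cos t + Real.cos θ + 1 := by linarith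
  have hlb : t * (θ - θ^3/6) * (3 - t^2/2 + t^4/24 - t^6/720 - θ^2/2)
      ≤ t * Real.sin θ * (Real.cos t + Real.cos θ + 1) :=
    mul_le_mul h1 h2 hB.le (mul_nonneg ht0.le hsinθ.le)
  have hcore := coreA_poly (θ^2) (t^2) (by positivity) hu9 hts
  have hcore2 := mul_pos (mul_pos hθ ht0) hcore
  have hkey : θ * ((3 - θ^2 + θ^4/12) * (t - t^3/6 + t^5/120))
      < t * (θ - θ^3/6) * (3 - t^2/2 + t^4/24 - t^6/720 - θ^2/2) := by linarith
  have hfinal : θ * ((2*Real.cos θ + 1) * Real.sin t)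
      < θ * (N * Real.sin θ * (Real.cos t + Real.cos θ + 1)) := by
    have e : θ * (N * Real.sin θ * (Real.cos t + Real.cos θ + 1))
        = t * Real.sin θ * (Real.cos t + Real.cos θ + 1) := by rw [htdef]; ring
    rw [e]
    calc θ * ((2*Real.cos θ + 1) * Real.sin t)
        ≤ θ * ((3 - θ^2 + θ^4/12) * (t - t^3/6 + t^5/120)) :=
          mul_le_mul_of_nonneg_left hub hθ.le
      _ < t * (θ - θ^3/6) * (3 - t^2/2 + t^4/24 - t^6/720 - θ^2/2) := hkey
      _ ≤ t * Real.sin θ * (Real.cos t + Real.cos θ + 1) := hlb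
  exact lt_of_mul_lt_mul_left hfinal hθ.le
lemma lt_of_sin_lt {a b : ℝ} (ha : 0 ≤ a) (haπ : a ≤ π/2) (hb : 0 < b) (hb1 : b ≤ 1)
    (h : Real.sin a < b - b^3/6) : a < b := by
  by_contra hab
  push_neg at hab
  have hbπ : b ≤ π/2 := by linarith [Real.pi_gt_three]
  have h2 := Real.strictMonoOn_sin.monotoneOn (Set.mem_Icc.2 ⟨by linarith, hbπ⟩)
    (Set.mem_Icc.2 ⟨by linarith, haπ⟩) hab
  have := sin_ge_t3 b hb.le
  linarith

lemma regionM_aux (θ t N : ℝ) (hθ : 0 < θ) (hθπ : θ ≤ π/2) (htdef : t = N*θ) (hn3 : 3 ≤ N)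
    (ht : 11/5 ≤ t) (hc : 1/10 ≤ Real.cos θ) :
    (2*Real.cos θ + 1) * Real.sin t <
      N * Real.sin θ * (Real.cos t + Real.cos θ + 1) := by
  have hsinθ : 0 < Real.sin θ := Real.sin_pos_of_pos_of_lt_pi hθ (by linarith [Real.pi_gt_three])
  have hK : 0 < N * Real.sin θ := by positivity
  have hc1 : Real.cos θ ≤ 1 := Real.cos_le_one θ
  have hPyth : Real.sin θ^2 + Real.cos θ^2 = 1 := Real.sin_sq_add_cos_sq θ
  have H : (2*Real.cos θ+1)^2 < (N*Real.sin θ)^2 * (Real.cos θ^2 + 2*Real.cos θ) := by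
    by_cases hc8 : Real.cos θ ≤ 4/5
    · have hK2 : 9*(1 - Real.cos θ^2) ≤ (N*Real.sin θ)^2 := by
        nlinarith [mul_le_mul_of_nonneg_right hn3 hsinθ.le]
      have hpoly : (2*Real.cos θ+1)^2 < 9*(1-Real.cos θ^2) * (Real.cos θ^2 + 2*Real.cos θ) := by
        nlinarith [mul_nonneg (sub_nonneg.2 hc) (sub_nonneg.2 hc8),
          mul_nonneg (mul_nonneg (sub_nonneg.2 hc) (sub_nonneg.2 hc8)) (sub_nonneg.2 hc),
          mul_nonneg (mul_nonneg (sub_nonneg.2 hc) (sub_nonneg.2 hc8)) (sub_nonneg.2 hc8)]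
      nlinarith [mul_le_mul_of_nonneg_right hK2
        (by nlinarith : (0:ℝ) ≤ Real.cos θ^2 + 2*Real.cos θ)]
    · push_neg at hc8
      have hs6 : Real.sin θ ≤ 3/5 := by nlinarith
      have hθ66 : θ < 33/50 := by
        apply lt_of_sin_lt hθ.le hθπ (by norm_num) (by norm_num)
        norm_num
        linarith
      have hK51 : 51/25 ≤ N*Real.sin θ := by
        have h1 : θ - θ^3/6 ≤ Real.sin θ := sin_ge_t3 θ hθ.le
        have h2 : N*(θ - θ^3/6) ≤ N*Real.sin θ := by nlinarith
        have h3 : t*(1 - θ^2/6) = N*(θ - θ^3/6) := by rw [htdef]; ring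
        nlinarith [mul_le_mul_of_nonneg_right ht (by nlinarith : (0:ℝ) ≤ 1 - θ^2/6)]
      nlinarith [mul_le_mul hK51 hK51 (by norm_num) hK.le]
  nlinarith [sq_nonneg ((2*Real.cos θ+1)*Real.cos t + (N*Real.sin θ)*Real.sin t),
    Real.sin_sq_add_cos_sq t, mul_pos hK (by nlinarith : (0:ℝ) < 1 + Real.cos θ), hK]
section cases
variable {N C S s si co : ℝ}

lemma caseB0 (hNCS : 49/50*s ≤ N*(C*S)) (hNC : 0 < N*C) (hSpos : 0 < S)
    (h2S0 : 0 < 2*S+1) (h2S : 2*S+1 ≤ 6/5)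
    (hco : -1 ≤ co) (hsi1 : si ≤ 1) (hsim : -1 ≤ si)
    (hneg : si < 0 → π < s) (hπ : 3 < π) :
    (2*S+1) * (-si) < N*C*(co + S + 1) := by
  by_cases hss : 0 ≤ si
  · nlinarith [mul_nonneg hNC.le (by linarith : (0:ℝ) ≤ co + 1), mul_pos hNC hSpos,
      mul_nonneg h2S0.le hss]
  · push_neg at hss
    have hπs := hneg hss
    have h1 : (2*S+1)*(-si) ≤ 6/5*1 :=
      mul_le_mul h2S (by linarith) (by linarith) (by norm_num)
    nlinarith [mul_nonneg hNC.le (by linarith : (0:ℝ) ≤ co + 1)]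

lemma caseB1 (hNCS : 49/50*s ≤ N*(C*S)) (hNC : 0 < N*C) (hNC5 : 5*(99/100) ≤ N*C)
    (hSpos : 0 < S) (h2S0 : 0 < 2*S+1) (h2S : 2*S+1 ≤ 6/5)
    (hco1 : co ≤ 1) (hcom : -1 ≤ co) (hsi1 : si ≤ 1) (hsim : -1 ≤ si)
    (hneg : si < 0 → π < s) (hπ : 3 < π) :
    (2*S+1) * co < N*C*(si + S + 1) := by
  by_cases hcs : co ≤ 0
  · nlinarith [mul_nonneg hNC.le (by linarith : (0:ℝ) ≤ si + 1), mul_pos hNC hSpos,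
      mul_nonneg h2S0.le (by linarith : (0:ℝ) ≤ -co)]
  · push_neg at hcs
    have h1 : (2*S+1)*co ≤ 6/5*1 := mul_le_mul h2S hco1 hcs.le (by norm_num)
    by_cases hss : 0 ≤ si
    · nlinarith [mul_nonneg hNC.le (by linarith : (0:ℝ) ≤ si + S), mul_pos hNC hSpos]
    · push_neg at hss
      have hπs := hneg hss
      nlinarith [mul_nonneg hNC.le (by linarith : (0:ℝ) ≤ si + 1)]

set_option maxHeartbeats 1000000 in
lemma caseB2 {δ : ℝ} (hsdef : s = N*δ) (hN6 : 6 ≤ N) (hNC : 0 < N*C)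
    (hC99 : 99/100 ≤ C) (hC1 : C ≤ 1) (hC2 : 1 - δ^2/2 ≤ C)
    (hδpos : 0 < δ) (hδu : δ < 11/100)
    (hSd : δ - δ^3/6 ≤ S) (hSδ : S ≤ δ) (hSpos : 0 < S)
    (h2S0 : 0 < 2*S+1) (h2S : 2*S+1 ≤ 6/5) (hNCS : 49/50*s ≤ N*(C*S))
    (hco1 : co ≤ 1) (hcom : -1 ≤ co) (hsi1 : si ≤ 1) (hsim : -1 ≤ si)
    (hsile : si ≤ s) (hco4 : co ≤ 1 - s^2/2 + s^4/24)
    (hπ : 3 < π) (hπ315 : π < 315/100) :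
    (2*S+1) * si < N*C*(-co + S + 1) := by
  have hN0 : 0 < N := by linarith
  have hC0 : 0 < C := by linarith
  have hs0 : 0 < s := by rw [hsdef]; positivity
  by_cases hss : si ≤ 0
  · nlinarith [mul_nonneg hNC.le (by linarith : (0:ℝ) ≤ 1 - co), mul_pos hNC hSpos,
      mul_nonneg h2S0.le (by linarith : (0:ℝ) ≤ -si)]
  · push_neg at hss
    by_cases hsπ : s ≤ π
    · have hs315 : s ≤ 315/100 := by linarith
      have hδs : 6*δ ≤ s := by
        rw [hsdef]; exact mul_le_mul_of_nonneg_right hN6 hδpos.le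
      have h2Sδ : 2*S+1 ≤ 2*δ+1 := by linarith
      have hA1 : (2*S+1)*si ≤ (2*δ+1)*s := mul_le_mul h2Sδ hsile hss.le (by linarith)
      have hs2 : s^2 ≤ (315/100)^2 := by nlinarith
      have hq : 0 ≤ s^2/2 - s^4/24 := by
        nlinarith [mul_le_mul_of_nonneg_right hs2 (sq_nonneg s), sq_nonneg s]
      have hA2 : (99/100)*(s^2/2 - s^4/24) ≤ C * (1 - co) :=
        mul_le_mul hC99 (by linarith) hq hC0.le
      have hSd0 : 0 ≤ δ - δ^3/6 := by nlinarith [sq_nonneg δ]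
      have hA3 : δ - (2/3)*δ^3 ≤ C * S := by
        nlinarith [mul_le_mul hC2 hSd hSd0 hC0.le,
          mul_nonneg (mul_nonneg (mul_nonneg hδpos.le hδpos.le) (mul_nonneg hδpos.le hδpos.le)) hδpos.le]
      have hpoly : (2*δ+1)*δ < (99/100)*(s^2/2 - s^4/24) + (δ - (2/3)*δ^3) := by
        nlinarith [mul_le_mul hδs hδs (by linarith : (0:ℝ) ≤ 6*δ) hs0.le,
          mul_le_mul_of_nonneg_right hδu.le (sq_nonneg δ),
          mul_le_mul_of_nonneg_right hs2 (sq_nonneg s)]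
      have hper : (2*δ+1)*δ < C*(1 - co) + C*S := by linarith
      have hmul := mul_lt_mul_of_pos_left hper hN0
      have hrw : N*((2*δ+1)*δ) = (2*δ+1)*s := by rw [hsdef]; ring
      nlinarith [hA1, hmul]
    · push_neg at hsπ
      have h1 : (2*S+1)*si ≤ 6/5*1 := mul_le_mul h2S hsi1 hss.le (by norm_num)
      nlinarith [mul_nonneg hNC.le (by linarith : (0:ℝ) ≤ 1 - co)]

lemma caseB3 (hNCS : 49/50*s ≤ N*(C*S)) (hNC : 0 < N*C) (hNC3 : 3*(99/100) ≤ N*C)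
    (hSpos : 0 < S) (h2S0 : 0 < 2*S+1) (h2S : 2*S+1 ≤ 6/5)
    (hco1 : co ≤ 1) (hcom : -1 ≤ co) (hsi1 : si ≤ 1) (hsim : -1 ≤ si)
    (hneg : co < 0 → 0 < si → π/2 < s) (hπ : 3 < π) :
    (2*S+1) * (-co) < N*C*(-si + S + 1) := by
  by_cases hcs : 0 ≤ co
  · nlinarith [mul_nonneg hNC.le (by linarith : (0:ℝ) ≤ 1 - si), mul_pos hNC hSpos,
      mul_nonneg h2S0.le hcs]
  · push_neg at hcs
    have h1 : (2*S+1)*(-co) ≤ 6/5*1 :=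
      mul_le_mul h2S (by linarith) (by linarith) (by norm_num)
    by_cases hss : si ≤ 0
    · nlinarith [mul_nonneg hNC.le (by linarith : (0:ℝ) ≤ -si), mul_pos hNC hSpos]
    · push_neg at hss
      have hπs := hneg hcs hss
      nlinarith [mul_nonneg hNC.le (by linarith : (0:ℝ) ≤ 1 - si)]

end cases

set_option maxHeartbeats 1000000 in
lemma regionB (n : ℕ) (hn : 3 ≤ n) (θ : ℝ) (hθ0 : 0 < θ) (hθπ : θ ≤ π/2)
    (hc : Real.cos θ < 1/10) (hexcl : ¬(n % 4 = 2 ∧ θ = π/2)) :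
    (2*Real.cos θ + 1) * Real.sin ((n:ℝ)*θ) <
      (n:ℝ) * Real.sin θ * (Real.cos ((n:ℝ)*θ) + Real.cos θ + 1) := by
  obtain ⟨m, r, hr4, hndef⟩ : ∃ m r, r < 4 ∧ n = 4*m + r :=
    ⟨n/4, n%4, Nat.mod_lt _ (by norm_num), (Nat.div_add_mod n 4).symm⟩
  obtain ⟨δ, hθeq, hδdef⟩ : ∃ δ, θ = π/2 - δ ∧ δ = π/2 - θ := ⟨π/2 - θ, by ring, rfl⟩
  have hπ3 : (3:ℝ) < π := Real.pi_gt_three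
  have hδ0 : 0 ≤ δ := by rw [hδdef]; linarith
  have hcθ : Real.cos θ = Real.sin δ := by rw [hθeq, Real.cos_pi_div_two_sub]
  have hsθ : Real.sin θ = Real.cos δ := by rw [hθeq, Real.sin_pi_div_two_sub]
  have hS10 : Real.sin δ < 1/10 := by rw [← hcθ]; exact hc
  have hδπ : δ ≤ π/2 := by rw [hδdef]; linarith
  have hδu : δ < 11/100 := by
    apply lt_of_sin_lt hδ0 hδπ (by norm_num) (by norm_num)
    nlinarith
  have hS0 : 0 ≤ Real.sin δ := Real.sin_nonneg_of_nonneg_of_le_pi hδ0 (by linarith)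
  have hSd : δ - δ^3/6 ≤ Real.sin δ := sin_ge_t3 δ hδ0
  have hSδ : Real.sin δ ≤ δ := by
    rcases eq_or_lt_of_le hδ0 with h|h
    · simp [← h]
    · exact (Real.sin_lt h).le
  have hC99 : 99/100 ≤ Real.cos δ := by
    have := Real.one_sub_sq_div_two_le_cos (x := δ)
    nlinarith
  have hC1 : Real.cos δ ≤ 1 := Real.cos_le_one δ
  have hC0 : 0 < Real.cos δ := by linarith
  have hN3 : (3:ℝ) ≤ (n:ℝ) := by exact_mod_cast hn
  have hN0 : (0:ℝ) < (n:ℝ) := by linarith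
  obtain ⟨s, hsdef⟩ : ∃ s:ℝ, s = (n:ℝ)*δ := ⟨_, rfl⟩
  have hs0 : 0 ≤ s := by rw [hsdef]; positivity
  have hCS : 49/50*δ ≤ Real.cos δ * Real.sin δ := by
    have h1 := mul_le_mul_of_nonneg_right hC99 hS0
    have hδ2 : δ^2 ≤ (11/100)^2 := by nlinarith
    have hδ3 : δ^3 ≤ (11/100)^2*δ := by nlinarith [mul_le_mul_of_nonneg_right hδ2 hδ0]
    nlinarith
  have hNCS : 49/50 * s ≤ (n:ℝ) * (Real.cos δ * Real.sin δ) := by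
    have := mul_le_mul_of_nonneg_left hCS hN0.le
    calc 49/50*s = (n:ℝ)*(49/50*δ) := by rw [hsdef]; ring
    _ ≤ _ := this
  have h2S0 : (0:ℝ) < 2*Real.sin δ + 1 := by linarith
  have h2S : 2*Real.sin δ + 1 ≤ 6/5 := by linarith
  have hNC : 0 < (n:ℝ)*Real.cos δ := mul_pos hN0 hC0
  have hnθ : (n:ℝ)*θ = ((r:ℝ)*(π/2) - s) + (m:ℕ)*(2*π) := by
    rw [hθeq, hsdef, hndef]; push_cast; ring
  have hcosn : Real.cos ((n:ℝ)*θ) = Real.cos ((r:ℝ)*(π/2) - s) := by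
    rw [hnθ, Real.cos_add_nat_mul_two_pi]
  have hsinn : Real.sin ((n:ℝ)*θ) = Real.sin ((r:ℝ)*(π/2) - s) := by
    rw [hnθ, Real.sin_add_nat_mul_two_pi]
  have hss1 : Real.sin s ≤ 1 := Real.sin_le_one s
  have hssm1 : -1 ≤ Real.sin s := Real.neg_one_le_sin s
  have hcs1 : Real.cos s ≤ 1 := Real.cos_le_one s
  have hcsm1 : -1 ≤ Real.cos s := Real.neg_one_le_cos s
  rw [hcθ, hsθ, hcosn, hsinn]
  -- case δ = 0
  rcases eq_or_lt_of_le hδ0 with hδe | hδpos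
  · have hsz : s = 0 := by rw [hsdef, ← hδe, mul_zero]
    have hSz : Real.sin δ = 0 := by rw [← hδe, Real.sin_zero]
    have hCz : Real.cos δ = 1 := by rw [← hδe, Real.cos_zero]
    rw [hsz, hSz, hCz]
    interval_cases r
    · norm_num
      linarith
    · rw [show ((1:ℕ):ℝ)*(π/2) - 0 = π/2 - 0 by push_cast; ring]
      norm_num
      linarith
    · exfalso; exact hexcl ⟨by omega, by rw [hθeq, ← hδe]; ring⟩
    · rw [show ((3:ℕ):ℝ)*(π/2) - 0 = π + (π/2 - 0) by push_cast; ring,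
        Real.cos_add, Real.sin_add]
      norm_num
      linarith
  -- δ > 0
  have hSpos : 0 < Real.sin δ := Real.sin_pos_of_pos_of_lt_pi hδpos (by linarith)
  have hspos : 0 < s := by rw [hsdef]; positivity
  have hsneg : Real.sin s < 0 → π < s := by
    intro h
    by_contra hh
    push_neg at hh
    exact absurd (Real.sin_nonneg_of_nonneg_of_le_pi hs0 hh) (by linarith)
  interval_cases r
  · have e0c : Real.cos (((0:ℕ):ℝ)*(π/2) - s) = Real.cos s := by norm_num
    have e0s : Real.sin (((0:ℕ):ℝ)*(π/2) - s) = -Real.sin s := by norm_num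
    rw [e0c, e0s]
    exact caseB0 hNCS hNC hSpos h2S0 h2S hcsm1 hss1 hssm1 hsneg hπ3
  · have hN5 : (5:ℝ) ≤ (n:ℝ) := by
      have : 5 ≤ n := by omega
      exact_mod_cast this
    have e1c : Real.cos (((1:ℕ):ℝ)*(π/2) - s) = Real.sin s := by
      rw [show ((1:ℕ):ℝ)*(π/2) - s = π/2 - s by push_cast; ring, Real.cos_pi_div_two_sub]
    have e1s : Real.sin (((1:ℕ):ℝ)*(π/2) - s) = Real.cos s := by
      rw [show ((1:ℕ):ℝ)*(π/2) - s = π/2 - s by push_cast; ring, Real.sin_pi_div_two_sub]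
    rw [e1c, e1s]
    exact caseB1 hNCS hNC (by nlinarith) hSpos h2S0 h2S hcs1 hcsm1 hss1 hssm1 hsneg hπ3
  · have hN6 : (6:ℝ) ≤ (n:ℝ) := by
      have : 6 ≤ n := by omega
      exact_mod_cast this
    have e2c : Real.cos (((2:ℕ):ℝ)*(π/2) - s) = -Real.cos s := by
      rw [show ((2:ℕ):ℝ)*(π/2) - s = π - s by push_cast; ring, Real.cos_pi_sub]
    have e2s : Real.sin (((2:ℕ):ℝ)*(π/2) - s) = Real.sin s := by
      rw [show ((2:ℕ):ℝ)*(π/2) - s = π - s by push_cast; ring, Real.sin_pi_sub]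
    rw [e2c, e2s]
    exact caseB2 hsdef hN6 hNC hC99 hC1 (Real.one_sub_sq_div_two_le_cos) hδpos hδu hSd hSδ hSpos h2S0 h2S hNCS
      hcs1 hcsm1 hss1 hssm1 ((Real.sin_lt hspos).le) (cos_le_t4 s hs0) hπ3
      (by linarith [Real.pi_lt_d2])
  · have e3c : Real.cos (((3:ℕ):ℝ)*(π/2) - s) = -Real.sin s := by
      rw [show ((3:ℕ):ℝ)*(π/2) - s = π + (π/2 - s) by push_cast; ring, Real.cos_add]
      simp [Real.cos_pi_div_two_sub]
    have e3s : Real.sin (((3:ℕ):ℝ)*(π/2) - s) = -Real.cos s := by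
      rw [show ((3:ℕ):ℝ)*(π/2) - s = π + (π/2 - s) by push_cast; ring, Real.sin_add]
      simp [Real.sin_pi_div_two_sub]
    rw [e3c, e3s]
    have hneg3 : Real.cos s < 0 → 0 < Real.sin s → π/2 < s := by
      intro h1 h2
      by_contra hh
      push_neg at hh
      exact absurd (Real.cos_nonneg_of_mem_Icc (Set.mem_Icc.2 ⟨by linarith, hh⟩)) (by linarith)
    exact caseB3 hNCS hNC (by nlinarith) hSpos h2S0 h2S hcs1 hcsm1 hss1 hssm1 hneg3 hπ3
lemma U_eval_one : ∀ k : ℕ, (Polynomial.Chebyshev.U ℝ (k:ℤ)).eval 1 = k+1 := by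
  intro k
  induction k using Nat.twoStepInduction with
  | zero => simp [Polynomial.Chebyshev.U_zero]
  | one => norm_num [Polynomial.Chebyshev.U_one]
  | more k ih1 ih2 =>
    have e : ((k+2:ℕ):ℤ) = (k:ℤ)+2 := by push_cast; ring
    have e1 : ((k+1:ℕ):ℤ) = (k:ℤ)+1 := by push_cast; ring
    rw [e, Polynomial.Chebyshev.U_add_two]
    rw [e1] at ih2
    simp only [Polynomial.eval_sub, Polynomial.eval_mul, Polynomial.eval_ofNat,
      Polynomial.eval_X]
    rw [ih1, ih2]
    push_cast
    ring

lemma chebT_eval_cos (n : ℕ) (θ : ℝ) : (chebT n).eval (Real.cos θ) = Real.cos ((n:ℝ)*θ) := by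
  rw [chebT, Polynomial.Chebyshev.T_real_cos]
  norm_num

lemma chebT_deriv (n : ℕ) (θ : ℝ) :
    (derivative (chebT n)).eval (Real.cos θ) * Real.sin θ = (n:ℝ) * Real.sin ((n:ℝ)*θ) := by
  rw [chebT, Polynomial.Chebyshev.T_derivative_eq_U]
  rw [Polynomial.eval_mul]
  have := Polynomial.Chebyshev.U_real_cos θ ((n:ℤ) - 1)
  push_cast at this ⊢
  rw [mul_assoc, this]
  simp only [Polynomial.eval_intCast, Polynomial.eval_natCast]
  push_cast
  ring_nf
lemma chebT_deriv_one (n : ℕ) (hn : 1 ≤ n) :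
    (Polynomial.derivative (chebT n)).eval 1 = (n:ℝ)^2 := by
  rw [chebT, Polynomial.Chebyshev.T_derivative_eq_U, Polynomial.eval_mul]
  have e : (n:ℤ) - 1 = ((n-1:ℕ):ℤ) := by omega
  rw [e, U_eval_one (n-1)]
  simp only [Polynomial.eval_intCast]
  have e2 : ((n-1:ℕ):ℝ) = (n:ℝ) - 1 := by
    push_cast [Nat.cast_sub hn]
    ring
  rw [e2]
  push_cast
  ring

lemma trig2 (n : ℕ) (h2 : n % 4 = 2) :
    Real.cos ((n:ℝ)*(π/2)) = -1 ∧ Real.sin ((n:ℝ)*(π/2)) = 0 := by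
  obtain ⟨m, hm⟩ : ∃ m, n = 4*m+2 := ⟨n/4, by omega⟩
  have e : (n:ℝ)*(π/2) = π + (m:ℕ)*(2*π) := by rw [hm]; push_cast; ring
  rw [e, Real.cos_add_nat_mul_two_pi, Real.sin_add_nat_mul_two_pi]
  simp

lemma posW (n : ℕ) (hn : 3 ≤ n) (θ : ℝ) (hθ0 : 0 < θ) (hθπ : θ ≤ π/2)
    (hexcl : ¬(n % 4 = 2 ∧ θ = π/2)) :
    (2*Real.cos θ + 1) * Real.sin ((n:ℝ)*θ) <
      (n:ℝ) * Real.sin θ * (Real.cos ((n:ℝ)*θ) + Real.cos θ + 1) := by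
  by_cases hc : Real.cos θ < 1/10
  · exact regionB n hn θ hθ0 hθπ hc hexcl
  · push_neg at hc
    have hn3 : (3:ℝ) ≤ (n:ℝ) := by exact_mod_cast hn
    by_cases ht : (n:ℝ)*θ ≤ 11/5
    · exact regionA_aux θ ((n:ℝ)*θ) (n:ℝ) hθ0 rfl hn3 ht
    · push_neg at ht
      exact regionM_aux θ ((n:ℝ)*θ) (n:ℝ) hθ0 hθπ rfl hn3 ht.le hc

end PhiAux

open PhiAux Real in
/-- For every integer `n ≥ 3` and `x ∈ [0,1]`,
`T_n(x) + x + 1 - ((2x+1)/n²) T_n'(x) ≥ 0`, with equality only at `x = 1` and,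
if `n ≡ 2 (mod 4)`, also at `x = 0`. -/
theorem phi_nonneg (n : ℕ) (hn : 3 ≤ n) (x : ℝ) (hx : x ∈ Set.Icc (0 : ℝ) 1) :
    0 ≤ (chebT n).eval x + x + 1 - (2 * x + 1) / (n : ℝ) ^ 2 * (derivative (chebT n)).eval x ∧
    ((chebT n).eval x + x + 1 - (2 * x + 1) / (n : ℝ) ^ 2 * (derivative (chebT n)).eval x = 0 ↔
      x = 1 ∨ (n % 4 = 2 ∧ x = 0)) := by
  obtain ⟨hx0, hx1⟩ := hx
  have hn0 : (0:ℝ) < (n:ℝ) := by positivity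
  have hn0' : (n:ℝ) ≠ 0 := hn0.ne'
  rcases eq_or_lt_of_le hx1 with hx1e | hx1lt
  · -- x = 1
    subst hx1e
    have hT1 : (chebT n).eval 1 = 1 := by
      have := chebT_eval_cos n 0
      simpa using this
    have hD1 : (derivative (chebT n)).eval 1 = (n:ℝ)^2 := chebT_deriv_one n (by omega)
    rw [hT1, hD1]
    have e3 : (2*(1:ℝ)+1)/(n:ℝ)^2*(n:ℝ)^2 = 3 := by field_simp; ring
    constructor
    · linarith
    · constructor
      · intro _; exact Or.inl rfl
      · intro _; linarith
  · -- x < 1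
    have hθ0 : 0 < Real.arccos x := Real.arccos_pos.2 hx1lt
    have hθπ : Real.arccos x ≤ π/2 := Real.arccos_le_pi_div_two.2 hx0
    have hcos : Real.cos (Real.arccos x) = x := Real.cos_arccos (by linarith) hx1
    obtain ⟨θ, hθdef⟩ : ∃ θ, θ = Real.arccos x := ⟨_, rfl⟩
    rw [← hθdef] at hθ0 hθπ hcos
    have hθltπ : θ < π := lt_of_le_of_lt hθπ (by linarith [Real.pi_pos])
    have hsin : 0 < Real.sin θ := Real.sin_pos_of_pos_of_lt_pi hθ0 hθltπ
    have hTx : (chebT n).eval x = Real.cos ((n:ℝ)*θ) := by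
      rw [← hcos]; exact chebT_eval_cos n θ
    have hDx : (derivative (chebT n)).eval x * Real.sin θ = (n:ℝ) * Real.sin ((n:ℝ)*θ) := by
      rw [← hcos]; exact chebT_deriv n θ
    set E := (chebT n).eval x + x + 1 - (2 * x + 1) / (n : ℝ) ^ 2 *
      (derivative (chebT n)).eval x with hEdef
    set W := (n:ℝ) * Real.sin θ * (Real.cos ((n:ℝ)*θ) + Real.cos θ + 1) -
      (2*Real.cos θ + 1) * Real.sin ((n:ℝ)*θ) with hWdef
    have hDval : (derivative (chebT n)).eval x = (n:ℝ) * Real.sin ((n:ℝ)*θ) / Real.sin θ := by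
      rw [eq_div_iff hsin.ne']
      exact hDx
    have hEW : E * ((n:ℝ) * Real.sin θ) = W := by
      rw [hEdef, hWdef, hTx, hDval, ← hcos]
      field_simp
    have hpos : 0 < (n:ℝ) * Real.sin θ := mul_pos hn0 hsin
    by_cases h02 : n % 4 = 2 ∧ x = 0
    · -- equality case at x = 0
      have hθpi2 : θ = π/2 := by rw [hθdef, h02.2, Real.arccos_zero]
      have ht2 := trig2 n h02.1
      have hW0 : W = 0 := by
        rw [hWdef, hθpi2, ht2.1, ht2.2]
        simp
      have hE0 : E = 0 := by
        have := hEW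
        rw [hW0] at this
        exact (mul_eq_zero.1 this).resolve_right hpos.ne'
      exact ⟨le_of_eq hE0.symm, iff_of_true hE0 (Or.inr h02)⟩
    · -- strict case
      have hexcl : ¬(n % 4 = 2 ∧ θ = π/2) := by
        rintro ⟨h2, hpi⟩
        apply h02
        refine ⟨h2, ?_⟩
        rw [← hcos, hpi, Real.cos_pi_div_two]
      have hWpos : 0 < W := by
        rw [hWdef]
        have := posW n hn θ hθ0 hθπ hexcl
        linarith
      have hEpos : 0 < E := by
        by_contra h
        push_neg at h
        nlinarith [hEW]
      refine ⟨hEpos.le, ?_⟩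
      constructor
      · intro h; exact absurd h hEpos.ne'
      · rintro (h1 | h02')
        · exact absurd h1 hx1lt.ne
        · exact absurd h02' h02
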